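/- arXiv:2401.09665 — 5 statements merged into one kernel-verified Lean document; each statement's English description precedes it below -/
import Mathlib

section
/- For all α_2 > α_1 > 0 one has the strict Loewner ordering V_x(α_2) <_L V_x(α_1) <_L V_x(0); in particular the asymptotic sampling covariance of the SRRW strictly decreases in α. -/
open Matrix

noncomputable section

/-- Strict Loewner ordering: `M₁ <_L M₂` iff `M₂ − M₁` is positive semidefinite and `M₁ ≠ M₂`. -/
def LoewnerLT {n : ℕ} (M₁ M₂ : Matrix (Fin n) (Fin n) ℝ) : Prop :=
  (M₂ - M₁).PosSemidef ∧ M₁ ≠ M₂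

lemma psd_smul_vecMulVec {n : ℕ} {c : ℝ} (hc : 0 ≤ c) (v : Fin n → ℝ) :
    (c • vecMulVec v v).PosSemidef := by
  have h : (vecMulVec v v).PosSemidef := by
    have hvv : vecMulVec v v = (replicateRow Unit v)ᴴ * replicateRow Unit v := by
      rw [conjTranspose_replicateRow, star_trivial, ← vecMulVec_eq]
    rw [hvv]
    exact posSemidef_conjTranspose_mul_self _
  rw [posSemidef_iff_dotProduct_mulVec] at h ⊢
  constructor
  · show (c • vecMulVec v v)ᴴ = c • vecMulVec v v
    rw [conjTranspose_smul, h.1.eq, star_trivial]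
  · intro x
    rw [smul_mulVec, dotProduct_smul, smul_eq_mul]
    exact mul_nonneg hc (h.2 x)

lemma psd_sum {n m : ℕ} (d : Fin m → ℝ) (hd : ∀ i, 0 ≤ d i) (u : Fin m → Fin n → ℝ) :
    (∑ i, d i • vecMulVec (u i) (u i)).PosSemidef := by
  refine Finset.sum_induction (fun i => d i • vecMulVec (u i) (u i))
    (fun M => M.PosSemidef) (fun A B hA hB => hA.add hB) Matrix.PosSemidef.zero ?_
  intro i _
  exact psd_smul_vecMulVec (hd i) (u i)

lemma trace_smul_vecMulVec {n : ℕ} (c : ℝ) (v : Fin n → ℝ) :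
    (c • vecMulVec v v).trace = c * ∑ j, v j ^ 2 := by
  simp [Matrix.trace, Matrix.diag, vecMulVec_apply, Finset.mul_sum, sq]

/-- **Strict monotone decrease of the SRRW asymptotic sampling covariance in `α`.**
For `V_x(α) = ∑_{i=1}^{N−1} [1/(2α(1+λ_i)+2−s)]·[(1+λ_i)/(1−λ_i)]·u_i u_iᵀ` with
`λ_i ∈ (−1,1)`, nonzero vectors `u_i` and `s ∈ {0,1}`:
for all `α₂ > α₁ > 0`, `V_x(α₂) <_L V_x(α₁) <_L V_x(0)`. -/
theorem srrw_sampling_covariance_strictly_decreasing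
    {N : ℕ} (hN : 2 ≤ N)
    (lam : Fin (N - 1) → ℝ) (hlam : ∀ i, -1 < lam i ∧ lam i < 1)
    (u : Fin (N - 1) → (Fin N → ℝ)) (hu : ∀ i, u i ≠ 0)
    (s : ℝ) (hs : s = 0 ∨ s = 1)
    (Vx : ℝ → Matrix (Fin N) (Fin N) ℝ)
    (hVx : ∀ α, Vx α =
      ∑ i, ((1 / (2 * α * (1 + lam i) + 2 - s)) * ((1 + lam i) / (1 - lam i))) •
        vecMulVec (u i) (u i)) :
    ∀ α₁ α₂ : ℝ, 0 < α₁ → α₁ < α₂ →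
      LoewnerLT (Vx α₂) (Vx α₁) ∧ LoewnerLT (Vx α₁) (Vx 0) := by
  have hs1 : s ≤ 1 := by rcases hs with h | h <;> simp [h]
  -- coefficient function
  set c : ℝ → Fin (N - 1) → ℝ :=
    fun α i => (1 / (2 * α * (1 + lam i) + 2 - s)) * ((1 + lam i) / (1 - lam i)) with hc
  have hden : ∀ (α : ℝ) i, 0 ≤ α → 0 < 2 * α * (1 + lam i) + 2 - s := by
    intro α i hα
    have h1 := (hlam i).1
    nlinarith
  have hckey : ∀ (α β : ℝ), 0 ≤ α → α < β → ∀ i, c β i < c α i := by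
    intro α β hα hαβ i
    have h1 := (hlam i).1
    have h2 := (hlam i).2
    have hdα := hden α i hα
    have hdβ := hden β i (le_of_lt (hα.trans_lt hαβ))
    have hlt : 2 * α * (1 + lam i) + 2 - s < 2 * β * (1 + lam i) + 2 - s := by nlinarith
    have hfrac : (1 : ℝ) / (2 * β * (1 + lam i) + 2 - s) < 1 / (2 * α * (1 + lam i) + 2 - s) :=
      one_div_lt_one_div_of_lt hdα hlt
    have hpos : 0 < (1 + lam i) / (1 - lam i) := div_pos (by linarith) (by linarith)
    exact mul_lt_mul_of_pos_right hfrac hpos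
  have key : ∀ (α β : ℝ), 0 ≤ α → α < β → LoewnerLT (Vx β) (Vx α) := by
    intro α β hα hαβ
    have hd : ∀ i, 0 ≤ c α i - c β i := fun i => le_of_lt (sub_pos.mpr (hckey α β hα hαβ i))
    have hdiff : Vx α - Vx β = ∑ i, (c α i - c β i) • vecMulVec (u i) (u i) := by
      rw [hVx α, hVx β, ← Finset.sum_sub_distrib]
      congr 1; ext i
      rw [sub_smul]
    constructor
    · rw [hdiff]; exact psd_sum _ hd u
    · -- trace argument
      intro heq
      have htr : (Vx α - Vx β).trace = 0 := by rw [heq]; simp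
      have hcard : 0 < N - 1 := by omega
      have hne : (Finset.univ : Finset (Fin (N - 1))).Nonempty := by
        simpa [Finset.univ_nonempty_iff] using Fin.pos_iff_nonempty.mp hcard
      have htr2 : (Vx α - Vx β).trace = ∑ i, (c α i - c β i) * ∑ j, u i j ^ 2 := by
        rw [hdiff, Matrix.trace_sum]
        exact Finset.sum_congr rfl fun i _ => trace_smul_vecMulVec _ _
      have hpos : 0 < ∑ i, (c α i - c β i) * ∑ j, u i j ^ 2 := by
        apply Finset.sum_pos _ hne
        intro i _
        have hunorm : 0 < ∑ j, u i j ^ 2 := by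
          have := hu i
          rcases Function.ne_iff.mp this with ⟨j, hj⟩
          apply Finset.sum_pos' (fun k _ => sq_nonneg _)
          have hj' : u i j ≠ 0 := by simpa using hj
          exact ⟨j, Finset.mem_univ j, by positivity⟩
        exact mul_pos (sub_pos.mpr (hckey α β hα hαβ i)) hunorm
      rw [htr2] at htr
      exact absurd htr (ne_of_gt hpos)
  intro α₁ α₂ h1 h2
  exact ⟨key α₁ α₂ h1.le h2, key 0 α₁ le_rfl h1⟩
end
end

section
/- Spectral identity for the slow-timescale noise covariance: with B = J_12(α) J_22(α)^{−1}, one has U_11 − B U_21 − U_12 B^T + B U_22 B^T = Σ_{i=1}^{N−1} [1/(α(1+λ_i)+1)^2]·[(1+λ_i)/(1−λ_i)]·H^T u_i u_i^T H. -/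
open Matrix

noncomputable section

lemma mul_vecMulVec' {m n p : Type*} [Fintype n] (M : Matrix m n ℝ) (v : n → ℝ) (w : p → ℝ) :
    M * vecMulVec v w = vecMulVec (M *ᵥ v) w := by
  ext i j
  simp [Matrix.mul_apply, vecMulVec_apply, mulVec, dotProduct, Finset.sum_mul, mul_assoc]

lemma smul_vecMulVec' {m p : Type*} (a : ℝ) (v : m → ℝ) (w : p → ℝ) :
    vecMulVec (a • v) w = a • vecMulVec v w := by
  ext i j
  simp [vecMulVec_apply, mul_assoc]

lemma vecMulVec_symm {m : Type*} (v : m → ℝ) : (vecMulVec v v)ᵀ = vecMulVec v v := by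
  ext i j
  simp [vecMulVec_apply, transpose_apply, mul_comm]

/-- **Spectral identity for the slow-timescale noise covariance.** -/
theorem srrw_slow_timescale_noise_covariance_identity
    {N D : ℕ} (hN : 2 ≤ N) (hD : 1 ≤ D)
    (α : ℝ) (hα : 0 ≤ α)
    (P : Matrix (Fin N) (Fin N) ℝ) (μ : Fin N → ℝ)
    (lam : Fin (N - 1) → ℝ) (hlam : ∀ i, -1 < lam i ∧ lam i < 1)
    (u : Fin (N - 1) → (Fin N → ℝ))
    (hu_eig : ∀ i, Pᵀ *ᵥ u i = lam i • u i)
    (hu_sum : ∀ i, ∑ j, u i j = 0)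
    (H : Matrix (Fin N) (Fin D) ℝ)
    (J12 : Matrix (Fin D) (Fin N) ℝ)
    (hJ12 : J12 = -α • (Hᵀ * (Pᵀ + 1)))
    (J22 : Matrix (Fin N) (Fin N) ℝ)
    (hJ22 : J22 = (2 * α) • vecMulVec μ (fun _ => (1 : ℝ)) - α • Pᵀ - (α + 1) • (1 : Matrix (Fin N) (Fin N) ℝ))
    (hJ22_inv : IsUnit J22.det)
    (U11 : Matrix (Fin D) (Fin D) ℝ)
    (hU11 : U11 = ∑ i, ((1 + lam i) / (1 - lam i)) • (Hᵀ * vecMulVec (u i) (u i) * H))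
    (U12 : Matrix (Fin D) (Fin N) ℝ)
    (hU12 : U12 = ∑ i, ((1 + lam i) / (1 - lam i)) • (Hᵀ * vecMulVec (u i) (u i)))
    (U21 : Matrix (Fin N) (Fin D) ℝ) (hU21 : U21 = U12ᵀ)
    (U22 : Matrix (Fin N) (Fin N) ℝ)
    (hU22 : U22 = ∑ i, ((1 + lam i) / (1 - lam i)) • vecMulVec (u i) (u i))
    (B : Matrix (Fin D) (Fin N) ℝ) (hB : B = J12 * J22⁻¹) :
    U11 - B * U21 - U12 * Bᵀ + B * U22 * Bᵀ =
      ∑ i, ((1 / (α * (1 + lam i) + 1) ^ 2) * ((1 + lam i) / (1 - lam i))) •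
        (Hᵀ * vecMulVec (u i) (u i) * H) := by
  set c : Fin (N - 1) → ℝ := fun i => α * (1 + lam i) + 1 with hc_def
  have hc : ∀ i, c i ≠ 0 := by
    intro i
    have h1 := (hlam i).1
    have : 0 < c i := by
      have : 0 ≤ α * (1 + lam i) := mul_nonneg hα (by linarith)
      simp only [hc_def]; linarith
    linarith
  set t : Fin (N - 1) → ℝ := fun i => α * (1 + lam i) / c i with ht_def
  -- J22 acting on eigenvectors
  have hJ22u : ∀ i, J22 *ᵥ u i = (-(c i)) • u i := by
    intro i
    have hzero : vecMulVec μ (fun _ => (1 : ℝ)) *ᵥ u i = 0 := by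
      ext j
      simp [vecMulVec_apply, mulVec, dotProduct, ← Finset.mul_sum, hu_sum i]
    rw [hJ22]
    rw [sub_mulVec, sub_mulVec, smul_mulVec, smul_mulVec, smul_mulVec,
      hzero, hu_eig i, one_mulVec]
    ext j
    simp [hc_def]
    ring
  have hinv : ∀ i, J22⁻¹ *ᵥ u i = (-(c i))⁻¹ • u i := by
    intro i
    have h1 : J22⁻¹ *ᵥ (J22 *ᵥ u i) = u i := by
      rw [mulVec_mulVec, Matrix.nonsing_inv_mul _ hJ22_inv, one_mulVec]
    rw [hJ22u i, mulVec_smul] at h1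
    have hne : (-(c i)) ≠ 0 := neg_ne_zero.mpr (hc i)
    calc J22⁻¹ *ᵥ u i = (-(c i))⁻¹ • ((-(c i)) • (J22⁻¹ *ᵥ u i)) := by
          rw [smul_smul, inv_mul_cancel₀ hne, one_smul]
      _ = (-(c i))⁻¹ • u i := by rw [h1]
  have hJ12u : ∀ i, J12 *ᵥ u i = (-(α * (1 + lam i))) • (Hᵀ *ᵥ u i) := by
    intro i
    rw [hJ12, smul_mulVec, ← mulVec_mulVec, add_mulVec, hu_eig i, one_mulVec]
    rw [mulVec_add, mulVec_smul]
    ext j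
    simp
    ring
  have hBu : ∀ i, B *ᵥ u i = t i • (Hᵀ *ᵥ u i) := by
    intro i
    rw [hB, ← mulVec_mulVec, hinv i, mulVec_smul, hJ12u i, smul_smul]
    congr 1
    field_simp [ht_def]
    rfl
  have hBV : ∀ i, B * vecMulVec (u i) (u i) = t i • (Hᵀ * vecMulVec (u i) (u i)) := by
    intro i
    rw [mul_vecMulVec', hBu i, smul_vecMulVec', mul_vecMulVec']
  have hBVH : ∀ i, B * vecMulVec (u i) (u i) * H = t i • (Hᵀ * vecMulVec (u i) (u i) * H) := by
    intro i
    rw [hBV i, Matrix.smul_mul]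
  set κ : Fin (N - 1) → ℝ := fun i => (1 + lam i) / (1 - lam i) with hκ_def
  set X : Fin (N - 1) → Matrix (Fin D) (Fin D) ℝ :=
    fun i => Hᵀ * vecMulVec (u i) (u i) * H with hX_def
  have hXsym : ∀ i, (X i)ᵀ = X i := by
    intro i
    simp only [hX_def, transpose_mul, transpose_transpose, vecMulVec_symm, Matrix.mul_assoc]
  have hBU21 : B * U21 = ∑ i, (κ i * t i) • X i := by
    rw [hU21, hU12, transpose_sum, Matrix.mul_sum]
    refine Finset.sum_congr rfl fun i _ => ?_
    rw [transpose_smul, transpose_mul, vecMulVec_symm, Matrix.mul_smul, ← Matrix.mul_assoc,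
      hBV i, Matrix.smul_mul, smul_smul, transpose_transpose]
  have hU12Bt : U12 * Bᵀ = ∑ i, (κ i * t i) • X i := by
    have : U12 * Bᵀ = (B * U21)ᵀ := by
      rw [transpose_mul, hU21, transpose_transpose]
    rw [this, hBU21, transpose_sum]
    refine Finset.sum_congr rfl fun i _ => ?_
    rw [transpose_smul, hXsym i]
  have hBU22Bt : B * U22 * Bᵀ = ∑ i, (κ i * (t i * t i)) • X i := by
    rw [hU22, Matrix.mul_sum, Matrix.sum_mul]
    refine Finset.sum_congr rfl fun i _ => ?_
    have h1 : Hᵀ * vecMulVec (u i) (u i) * Bᵀ = t i • X i := by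
      have h2 : Hᵀ * vecMulVec (u i) (u i) * Bᵀ = (B * vecMulVec (u i) (u i) * H)ᵀ := by
        rw [transpose_mul, transpose_mul, vecMulVec_symm, Matrix.mul_assoc]
      rw [h2, hBVH i, transpose_smul, hXsym i]
    rw [Matrix.mul_smul, Matrix.smul_mul, hBV i, Matrix.smul_mul, h1, smul_smul, smul_smul,
      mul_assoc]
  have hU11' : U11 = ∑ i, κ i • X i := hU11
  rw [hU11', hBU21, hU12Bt, hBU22Bt, ← Finset.sum_sub_distrib, ← Finset.sum_sub_distrib,
    ← Finset.sum_add_distrib]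
  refine Finset.sum_congr rfl fun i _ => ?_
  rw [← sub_smul, ← sub_smul, ← add_smul]
  congr 1
  have hci := hc i
  have hci' : (1 + lam i) * α + 1 ≠ 0 := by rw [mul_comm]; exact hci
  have hd : 1 - lam i ≠ 0 := by have := (hlam i).2; intro h; linarith
  simp only [ht_def, hκ_def, hc_def]
  field_simp
  ring
end
end

section
/- The SRRW asymptotic covariance solves its Lyapunov equation: the matrix V = Σ_{i=1}^{N−1} [1/(2α(1+λ_i)+2−s)]·[(1+λ_i)/(1−λ_i)]·u_i u_i^T satisfies J_22(α) V + V J_22(α)^T + s·V = −U_22. -/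
open Matrix

noncomputable section

lemma mul_vvm' {N : ℕ} (A : Matrix (Fin N) (Fin N) ℝ) (w v : Fin N → ℝ) :
    A * vecMulVec w v = vecMulVec (A *ᵥ w) v := by
  ext i j
  simp [mul_apply, vecMulVec_apply, mulVec, dotProduct, Finset.sum_mul, mul_assoc]

/-- **The SRRW asymptotic covariance solves its Lyapunov equation.**
With `J_22(α) = 2α μ 1ᵀ − α Pᵀ − (α+1) I` and
`U_22 = ∑_{i=1}^{N−1} ((1+λ_i)/(1−λ_i)) u_i u_iᵀ`, the matrix
`V = ∑_{i=1}^{N−1} [1/(2α(1+λ_i)+2−s)]·[(1+λ_i)/(1−λ_i)]·u_i u_iᵀ`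
satisfies `J_22(α) V + V J_22(α)ᵀ + s·V = −U_22`. -/
theorem srrw_covariance_solves_lyapunov
    {N : ℕ} (hN : 2 ≤ N)
    (α : ℝ) (hα : 0 ≤ α) (s : ℝ) (hs : s = 0 ∨ s = 1)
    (P : Matrix (Fin N) (Fin N) ℝ) (μ : Fin N → ℝ)
    (lam : Fin (N - 1) → ℝ) (hlam : ∀ i, -1 < lam i ∧ lam i < 1)
    (u : Fin (N - 1) → (Fin N → ℝ))
    (hu_eig : ∀ i, Pᵀ *ᵥ u i = lam i • u i)
    (hu_sum : ∀ i, ∑ j, u i j = 0)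
    (J22 : Matrix (Fin N) (Fin N) ℝ)
    (hJ22 : J22 = (2 * α) • vecMulVec μ (fun _ => (1 : ℝ)) - α • Pᵀ - (α + 1) • (1 : Matrix (Fin N) (Fin N) ℝ))
    (U22 : Matrix (Fin N) (Fin N) ℝ)
    (hU22 : U22 = ∑ i, ((1 + lam i) / (1 - lam i)) • vecMulVec (u i) (u i))
    (V : Matrix (Fin N) (Fin N) ℝ)
    (hV : V = ∑ i, ((1 / (2 * α * (1 + lam i) + 2 - s)) * ((1 + lam i) / (1 - lam i))) •
      vecMulVec (u i) (u i)) :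
    J22 * V + V * J22ᵀ + s • V = -U22 := by
  -- J22 acts on each u_i u_iᵀ by the scalar -(α * lam i + α + 1)
  have key : ∀ i : Fin (N - 1), J22 * vecMulVec (u i) (u i) =
      (-(α * lam i + α + 1)) • vecMulVec (u i) (u i) := by
    intro i
    rw [hJ22, Matrix.sub_mul, Matrix.sub_mul, Matrix.smul_mul, Matrix.smul_mul,
      Matrix.smul_mul, Matrix.one_mul, mul_vvm', mul_vvm']
    have h1 : vecMulVec μ (fun _ => (1 : ℝ)) *ᵥ u i = 0 := by
      ext k
      simp [vecMulVec_apply, mulVec, dotProduct, ← Finset.mul_sum, hu_sum i]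
    rw [h1, hu_eig i]
    ext k j
    simp [vecMulVec_apply, Matrix.sub_apply, Matrix.smul_apply, smul_eq_mul]
    ring
  have hsymm : ∀ i : Fin (N - 1), (vecMulVec (u i) (u i))ᵀ = vecMulVec (u i) (u i) := by
    intro i; ext k j; simp [vecMulVec_apply, mul_comm]
  have hVsymm : Vᵀ = V := by
    rw [hV, Matrix.transpose_sum]
    exact Finset.sum_congr rfl fun i _ => by rw [Matrix.transpose_smul, hsymm]
  have hJV : J22 * V = ∑ i, ((1 / (2 * α * (1 + lam i) + 2 - s)) * ((1 + lam i) / (1 - lam i))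
      * (-(α * lam i + α + 1))) • vecMulVec (u i) (u i) := by
    rw [hV, Finset.mul_sum]
    refine Finset.sum_congr rfl fun i _ => ?_
    rw [Matrix.mul_smul, key i, smul_smul]
  have hVJ : V * J22ᵀ = J22 * V := by
    have : V * J22ᵀ = (J22 * V)ᵀ := by rw [Matrix.transpose_mul, hVsymm]
    rw [this, hJV, Matrix.transpose_sum]
    exact Finset.sum_congr rfl fun i _ => by rw [Matrix.transpose_smul, hsymm]
  rw [hVJ, hJV, hV, hU22, Finset.smul_sum, ← Finset.sum_neg_distrib,
    ← Finset.sum_add_distrib, ← Finset.sum_add_distrib]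
  refine Finset.sum_congr rfl fun i _ => ?_
  rw [smul_smul, ← add_smul, ← add_smul, ← neg_smul]
  congr 1
  obtain ⟨hl1, hl2⟩ := hlam i
  have hd : 2 * α * (1 + lam i) + 2 - s ≠ 0 := by
    have h2 : 0 ≤ 2 * α * (1 + lam i) := by nlinarith
    rcases hs with h | h <;> rw [h] <;> nlinarith
  have h1 : (1 : ℝ) - lam i ≠ 0 := by linarith
  field_simp
  rw [div_eq_iff (by intro h; apply hd; linarith)]
  ring
end
end

section
/- Spectrum of the SRRW mean-field Jacobian: J_22(α) μ = −μ and J_22(α) u_i = −(α(1+λ_i)+1) u_i for each i ≤ N−1; consequently, since {u_1,…,u_{N−1}, μ} is a basis of ℝ^N, every eigenvalue of J_22(α) equals −1 or −(α(1+λ_i)+1) for some i, so for every α ≥ 0 the matrix J_22(α) is Hurwitz (all eigenvalues have strictly negative real part) and invertible. -/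
open Matrix

noncomputable section

lemma my_eval_charpoly {n : Type*} [Fintype n] [DecidableEq n] {R : Type*} [CommRing R]
    (M : Matrix n n R) (z : R) : M.charpoly.eval z = (z • (1 : Matrix n n R) - M).det := by
  rw [Matrix.charpoly, _root_.eval_det, matPolyEquiv_charmatrix]
  simp [smul_eq_diagonal_mul]

lemma my_vecMulVec_mulVec {n : Type*} [Fintype n] {R : Type*} [CommRing R]
    (w v x : n → R) : vecMulVec w v *ᵥ x = (v ⬝ᵥ x) • w := by
  ext i
  simp only [vecMulVec, mulVec, dotProduct, Pi.smul_apply, smul_eq_mul, of_apply]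
  rw [Finset.sum_mul]
  exact Finset.sum_congr rfl fun j _ => by ring

/-- If a square complex matrix has a "basis" of eigenvectors, every root of its charpoly is
one of the eigenvalues. -/
lemma root_charpoly_of_eigenbasis {D : ℕ} {ι : Type*} [Fintype ι] [DecidableEq ι] [Nonempty ι]
    (M : Matrix (Fin D) (Fin D) ℂ) (bc : ι → (Fin D → ℂ)) (e : ι → ℂ)
    (hLI : LinearIndependent ℂ bc) (hcard : Fintype.card ι = D)
    (heig : ∀ k, M *ᵥ bc k = e k • bc k)
    {z : ℂ} (hz : M.charpoly.IsRoot z) : ∃ k, z = e k := by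
  have hdet : (z • (1 : Matrix (Fin D) (Fin D) ℂ) - M).det = 0 := by
    rw [← my_eval_charpoly]; exact hz
  obtain ⟨v, hv0, hv⟩ := (Matrix.exists_mulVec_eq_zero_iff).2 hdet
  have hMv : M *ᵥ v = z • v := by
    have := hv
    rw [sub_mulVec, smul_mulVec, one_mulVec, sub_eq_zero] at this
    exact this.symm
  -- bc is a basis
  have hrank : Fintype.card ι = Module.finrank ℂ (Fin D → ℂ) := by
    simpa using hcard
  let B : Module.Basis ι ℂ (Fin D → ℂ) := basisOfLinearIndependentOfCardEqFinrank hLI hrank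
  have hB : ∀ k, B k = bc k := fun k => by
    simp [B, coe_basisOfLinearIndependentOfCardEqFinrank]
  set c : ι → ℂ := fun k => B.repr v k with hc
  have hvsum : v = ∑ k, c k • bc k := by
    conv_lhs => rw [← B.sum_repr v]
    exact Finset.sum_congr rfl fun k _ => by rw [hB]
  have hcoef : ∀ k, c k * (e k - z) = 0 := by
    have h1 : M *ᵥ v = ∑ k, (c k * e k) • bc k := by
      rw [hvsum, ← M.mulVecLin_apply, map_sum]
      refine Finset.sum_congr rfl fun k _ => ?_
      rw [_root_.map_smul, M.mulVecLin_apply, heig k, smul_smul]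
    have h2 : z • v = ∑ k, (z * c k) • bc k := by
      rw [hvsum, Finset.smul_sum]
      exact Finset.sum_congr rfl fun k _ => by rw [smul_smul]
    have h3 : ∑ k, (c k * e k - z * c k) • bc k = 0 := by
      simp only [sub_smul, Finset.sum_sub_distrib, ← h1, ← h2, hMv, sub_self]
    intro k
    have := Fintype.linearIndependent_iff.1 hLI _ h3 k
    rw [mul_sub]
    linear_combination this
  have hck : ∃ k, c k ≠ 0 := by
    by_contra h
    push_neg at h
    apply hv0
    rw [hvsum]
    simp [h]
  obtain ⟨k, hk⟩ := hck
  refine ⟨k, ?_⟩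
  have := hcoef k
  rcases mul_eq_zero.1 this with h | h
  · exact absurd h hk
  · exact (sub_eq_zero.1 h).symm


/-- A real square matrix is Hurwitz if all of its (complex) eigenvalues, i.e. the roots of its
characteristic polynomial over `ℂ`, have strictly negative real part. -/
def IsHurwitz {D : ℕ} (M : Matrix (Fin D) (Fin D) ℝ) : Prop :=
  ∀ z : ℂ, ((M.map (Complex.ofReal)).charpoly).IsRoot z → z.re < 0

/-- **Spectrum of the SRRW mean-field Jacobian.**
With `J_22(α) = 2α μ 1ᵀ − α Pᵀ − (α+1) I`: `J_22(α) μ = −μ`,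
`J_22(α) u_i = −(α(1+λ_i)+1) u_i` for each `i ≤ N−1`; consequently every (complex)
eigenvalue of `J_22(α)` equals `−1` or `−(α(1+λ_i)+1)` for some `i`, so for every `α ≥ 0`
the matrix `J_22(α)` is Hurwitz and invertible. -/
theorem srrw_jacobian_spectrum
    {N : ℕ} (hN : 2 ≤ N) (α : ℝ) (hα : 0 ≤ α)
    (P : Matrix (Fin N) (Fin N) ℝ) (μ : Fin N → ℝ)
    (hμ_sum : ∑ i, μ i = 1) (hμ_eig : Pᵀ *ᵥ μ = μ)
    (lam : Fin (N - 1) → ℝ) (hlam : ∀ i, -1 < lam i ∧ lam i < 1)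
    (u : Fin (N - 1) → (Fin N → ℝ))
    (hu_eig : ∀ i, Pᵀ *ᵥ u i = lam i • u i)
    (hu_sum : ∀ i, ∑ j, u i j = 0)
    (hbasis : LinearIndependent ℝ (Sum.elim u (fun _ : Unit => μ)))
    (J22 : Matrix (Fin N) (Fin N) ℝ)
    (hJ22 : J22 = (2 * α) • vecMulVec μ (fun _ => (1 : ℝ)) - α • Pᵀ - (α + 1) • (1 : Matrix (Fin N) (Fin N) ℝ)) :
    J22 *ᵥ μ = -μ ∧
    (∀ i, J22 *ᵥ u i = (-(α * (1 + lam i) + 1)) • u i) ∧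
    (∀ z : ℂ, ((J22.map (Complex.ofReal)).charpoly).IsRoot z →
      z = -1 ∨ ∃ i, z = (↑(-(α * (1 + lam i) + 1)) : ℂ)) ∧
    IsHurwitz J22 ∧ IsUnit J22.det := by
  -- dot products with the all-ones vector
  have hdotμ : (fun _ : Fin N => (1 : ℝ)) ⬝ᵥ μ = 1 := by
    simpa [dotProduct] using hμ_sum
  have hdotu : ∀ i, (fun _ : Fin N => (1 : ℝ)) ⬝ᵥ u i = 0 := fun i => by
    simpa [dotProduct] using hu_sum i
  -- the eigenvector equations
  have h1 : J22 *ᵥ μ = -μ := by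
    rw [hJ22, sub_mulVec, sub_mulVec, smul_mulVec, smul_mulVec, smul_mulVec,
      one_mulVec, my_vecMulVec_mulVec, hμ_eig, hdotμ]
    funext j
    simp only [Pi.sub_apply, Pi.smul_apply, Pi.neg_apply, smul_eq_mul, one_smul]
    ring
  have h2 : ∀ i, J22 *ᵥ u i = (-(α * (1 + lam i) + 1)) • u i := by
    intro i
    rw [hJ22, sub_mulVec, sub_mulVec, smul_mulVec, smul_mulVec, smul_mulVec,
      one_mulVec, my_vecMulVec_mulVec, hu_eig i, hdotu i]
    funext j
    simp only [Pi.sub_apply, Pi.smul_apply, Pi.neg_apply, smul_eq_mul, zero_smul,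
      Pi.zero_apply]
    ring
  -- set up the eigenbasis data
  set b : (Fin (N - 1) ⊕ Unit) → (Fin N → ℝ) := Sum.elim u (fun _ => μ) with hbdef
  set e : (Fin (N - 1) ⊕ Unit) → ℝ :=
    Sum.elim (fun i => -(α * (1 + lam i) + 1)) (fun _ => -1) with hedef
  have hb : ∀ k, J22 *ᵥ b k = e k • b k := by
    rintro (i | _)
    · simpa [hbdef, hedef] using h2 i
    · simpa [hbdef, hedef] using h1
  set M : Matrix (Fin N) (Fin N) ℂ := J22.map Complex.ofReal with hMdef
  set bc : (Fin (N - 1) ⊕ Unit) → (Fin N → ℂ) := fun k j => ((b k j : ℝ) : ℂ) with hbcdef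
  have hbc : ∀ k, M *ᵥ bc k = ((e k : ℝ) : ℂ) • bc k := by
    intro k
    funext j
    have hrj := congrFun (hb k) j
    simp only [mulVec, dotProduct, Pi.smul_apply, smul_eq_mul] at hrj ⊢
    simp only [hMdef, map_apply, hbcdef]
    push_cast
    exact_mod_cast congrArg (Complex.ofReal) hrj
  -- cardinality
  have hcard : Fintype.card (Fin (N - 1) ⊕ Unit) = N := by
    simp [Nat.sub_add_cancel (le_trans one_le_two hN)]
  let σ : (Fin (N - 1) ⊕ Unit) ≃ Fin N := Fintype.equivFinOfCardEq hcard
  -- linear independence over ℂ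
  set A : Matrix (Fin N) (Fin N) ℝ := Matrix.of fun i j => b (σ.symm i) j with hAdef
  have hAli : LinearIndependent ℝ (fun i => A i) := by
    have : (fun i => A i) = b ∘ σ.symm := rfl
    rw [this]
    exact hbasis.comp σ.symm σ.symm.injective
  have hAdet : A.det ≠ 0 := by
    have := (Matrix.isUnit_iff_isUnit_det A).mp (linearIndependent_rows_iff_isUnit.mp hAli)
    exact isUnit_iff_ne_zero.mp this
  set Ac : Matrix (Fin N) (Fin N) ℂ := A.map Complex.ofReal with hAcdef
  have hAcdet : Ac.det ≠ 0 := by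
    have : Ac.det = ((A.det : ℝ) : ℂ) := (RingHom.map_det Complex.ofRealHom A).symm
    rw [this]
    exact_mod_cast hAdet
  have hAcli : LinearIndependent ℂ (fun i => Ac i) :=
    linearIndependent_rows_iff_isUnit.mpr ((Matrix.isUnit_iff_isUnit_det Ac).mpr
      (isUnit_iff_ne_zero.mpr hAcdet))
  have hbcLI : LinearIndependent ℂ bc := by
    have hcomp : (fun k => Ac (σ k)) = bc := by
      funext k j
      simp [hAcdef, hAdef, hbcdef]
    rw [← hcomp]
    exact hAcli.comp σ σ.injective
  -- spectral classification
  have h3 : ∀ z : ℂ, (M.charpoly).IsRoot z →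
      z = -1 ∨ ∃ i, z = (↑(-(α * (1 + lam i) + 1)) : ℂ) := by
    intro z hz
    obtain ⟨k, hk⟩ := root_charpoly_of_eigenbasis M bc (fun k => ((e k : ℝ) : ℂ))
      hbcLI hcard hbc hz
    rcases k with i | _
    · right
      exact ⟨i, by simpa [hedef] using hk⟩
    · left
      rw [hk]
      simp [hedef]
  have h4 : IsHurwitz J22 := by
    intro z hz
    rcases h3 z hz with hz1 | ⟨i, hzi⟩
    · rw [hz1]; norm_num
    · rw [hzi, Complex.ofReal_re]
      have hli := hlam i
      nlinarith [mul_nonneg hα (by linarith [hli.1] : (0:ℝ) ≤ 1 + lam i)]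
  refine ⟨h1, h2, h3, h4, ?_⟩
  rw [isUnit_iff_ne_zero]
  intro h0
  have hMdet : M.det = 0 := by
    have : M.det = ((J22.det : ℝ) : ℂ) := (RingHom.map_det Complex.ofRealHom J22).symm
    rw [this, h0, Complex.ofReal_zero]
  have hroot : (M.charpoly).IsRoot 0 := by
    show M.charpoly.eval 0 = 0
    rw [my_eval_charpoly]
    simp [Matrix.det_neg, hMdet]
  have := h4 0 hroot
  simp at this
end
end

section
/- Jacobian of the SRRW stationary distribution at the target: the map π : ℝ^N_{>0} → ℝ^N defined by π_i[x] = (Σ_j μ_i P_{ij}(x_i/μ_i)^{−α}(x_j/μ_j)^{−α}) / (Σ_l Σ_j μ_l P_{lj}(x_l/μ_l)^{−α}(x_j/μ_j)^{−α}) is differentiable at x = μ with derivative Dπ(μ) = 2α μ 1^T − α P^T − α I; consequently, Dπ(μ) − I = 2α μ 1^T − α P^T − (α+1) I, and for any matrix H̄ ∈ ℝ^{N×D} with H̄^T μ = 0, the map x ↦ H̄^T π[x] has derivative −α H̄^T (P^T + I) at x = μ. -/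
open Matrix

noncomputable section

/-- The stationary distribution `π[x]` of the SRRW kernel:
`π_i[x] ∝ ∑_j μ_i P_{ij} (x_i/μ_i)^{−α}(x_j/μ_j)^{−α}`. -/
def srrwPi {N : ℕ} (P : Matrix (Fin N) (Fin N) ℝ) (μ : Fin N → ℝ) (α : ℝ)
    (x : Fin N → ℝ) : Fin N → ℝ := fun i =>
  (∑ j, μ i * P i j * (x i / μ i) ^ (-α) * (x j / μ j) ^ (-α)) /
    (∑ l, ∑ j, μ l * P l j * (x l / μ l) ^ (-α) * (x j / μ j) ^ (-α))

/-- **Jacobian of the SRRW stationary distribution at the target.**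
The map `π` is differentiable at `x = μ` with Jacobian `Dπ(μ) = 2α μ 1ᵀ − α Pᵀ − α I`;
consequently `Dπ(μ) − I = 2α μ 1ᵀ − α Pᵀ − (α+1) I`, and for any `H̄ ∈ ℝ^{N×D}` with
`H̄ᵀμ = 0`, the map `x ↦ H̄ᵀ π[x]` has derivative `−α H̄ᵀ(Pᵀ + I)` at `μ`. -/
theorem srrw_pi_jacobian_at_target
    {N D : ℕ} (hN : 2 ≤ N) (α : ℝ) (hα : 0 ≤ α)
    (P : Matrix (Fin N) (Fin N) ℝ) (μ : Fin N → ℝ)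
    (hP_nonneg : ∀ i j, 0 ≤ P i j) (hP_rowsum : ∀ i, ∑ j, P i j = 1)
    (hμ_pos : ∀ i, 0 < μ i) (hμ_sum : ∑ i, μ i = 1)
    (hrev : ∀ i j, μ i * P i j = μ j * P j i)
    (Hbar : Matrix (Fin N) (Fin D) ℝ) (hHbar : Hbarᵀ *ᵥ μ = 0) :
    HasFDerivAt (srrwPi P μ α)
      (((2 * α) • vecMulVec μ (fun _ => (1 : ℝ)) - α • Pᵀ -
          α • (1 : Matrix (Fin N) (Fin N) ℝ)).mulVecLin.toContinuousLinearMap) μ ∧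
    ((2 * α) • vecMulVec μ (fun _ => (1 : ℝ)) - α • Pᵀ - α • (1 : Matrix (Fin N) (Fin N) ℝ)) -
        (1 : Matrix (Fin N) (Fin N) ℝ) =
      (2 * α) • vecMulVec μ (fun _ => (1 : ℝ)) - α • Pᵀ -
        (α + 1) • (1 : Matrix (Fin N) (Fin N) ℝ) ∧
    HasFDerivAt (fun x => Hbarᵀ *ᵥ (srrwPi P μ α x))
      (((-α) • (Hbarᵀ * (Pᵀ + 1))).mulVecLin.toContinuousLinearMap) μ := by
  have hμne : ∀ i, μ i ≠ 0 := fun i => (hμ_pos i).ne'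
  -- the single-coordinate factor and its derivative
  set Dk : Fin N → ((Fin N → ℝ) →L[ℝ] ℝ) :=
    fun k => (-α * (μ k)⁻¹) • (ContinuousLinearMap.proj k) with hDk
  have hg : ∀ k : Fin N,
      HasFDerivAt (fun x : Fin N → ℝ => (x k / μ k) ^ (-α)) (Dk k) μ := by
    intro k
    have hin : HasFDerivAt (fun x : Fin N → ℝ => x k / μ k)
        (((μ k)⁻¹) • (ContinuousLinearMap.proj k : (Fin N → ℝ) →L[ℝ] ℝ)) μ := by
      have := (((μ k)⁻¹) •
        (ContinuousLinearMap.proj k : (Fin N → ℝ) →L[ℝ] ℝ)).hasFDerivAt (x := μ)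
      convert this using 2 with x
      simp [div_eq_inv_mul]
    have hrpow : HasDerivAt (fun t : ℝ => t ^ (-α)) (-α) ((fun x : Fin N → ℝ => x k / μ k) μ) := by
      have h1 : μ k / μ k = 1 := div_self (hμne k)
      have := Real.hasDerivAt_rpow_const (x := μ k / μ k) (p := -α)
        (Or.inl (by rw [h1]; exact one_ne_zero))
      simpa [h1] using this
    have h4 := hrpow.comp_hasFDerivAt μ hin
    have h5 : HasFDerivAt (fun x : Fin N → ℝ => (x k / μ k) ^ (-α))
        ((-α) • (((μ k)⁻¹) • (ContinuousLinearMap.proj k : (Fin N → ℝ) →L[ℝ] ℝ))) μ := by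
      simpa only [Function.comp_def] using h4
    exact h5.congr_fderiv (by rw [smul_smul])
  have hgval : ∀ k : Fin N, (μ k / μ k) ^ (-α) = 1 := by
    intro k; rw [div_self (hμne k), Real.one_rpow]
  -- numerator derivative
  set L : Fin N → ((Fin N → ℝ) →L[ℝ] ℝ) :=
    fun i => ∑ j, ((μ i * P i j) • Dk j + (μ i * P i j) • Dk i) with hL
  have hNf : ∀ i : Fin N,
      HasFDerivAt (fun x : Fin N → ℝ =>
        ∑ j, μ i * P i j * (x i / μ i) ^ (-α) * (x j / μ j) ^ (-α)) (L i) μ := by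
    intro i
    apply HasFDerivAt.fun_sum
    intro j _
    have h1 : HasFDerivAt (fun x : Fin N → ℝ => μ i * P i j * (x i / μ i) ^ (-α))
        ((μ i * P i j) • Dk i) μ := (hg i).const_mul _
    have h2 := h1.mul (hg j)
    refine h2.congr_fderiv ?_
    simp [hgval, mul_one]
  -- denominator derivative
  have hS : HasFDerivAt (fun x : Fin N → ℝ =>
      ∑ l, ∑ j, μ l * P l j * (x l / μ l) ^ (-α) * (x j / μ j) ^ (-α)) (∑ l, L l) μ :=
    HasFDerivAt.fun_sum fun l _ => hNf l
  -- values at μ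
  have hNval : ∀ i : Fin N,
      (∑ j, μ i * P i j * (μ i / μ i) ^ (-α) * (μ j / μ j) ^ (-α)) = μ i := by
    intro i
    have : ∀ j, μ i * P i j * (μ i / μ i) ^ (-α) * (μ j / μ j) ^ (-α) = μ i * P i j := by
      intro j; rw [hgval, hgval]; ring
    rw [Finset.sum_congr rfl fun j _ => this j, ← Finset.mul_sum, hP_rowsum, mul_one]
  have hSval :
      (∑ l, ∑ j, μ l * P l j * (μ l / μ l) ^ (-α) * (μ j / μ j) ^ (-α)) = 1 := by
    rw [Finset.sum_congr rfl fun l _ => hNval l, hμ_sum]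
  have hSne : (∑ l, ∑ j, μ l * P l j * (μ l / μ l) ^ (-α) * (μ j / μ j) ^ (-α)) ≠ 0 := by
    rw [hSval]; exact one_ne_zero
  -- applied formulas
  have hLapp : ∀ i v, L i v = -α * (∑ j, P j i * v j) + -α * v i := by
    intro i v
    have e1 : ∀ j : Fin N, ((μ i * P i j) • Dk j + (μ i * P i j) • Dk i) v
        = -α * (P j i * v j) + -α * (P i j * v i) := by
      intro j
      have h2 : μ i * P i j * (-α * (μ j)⁻¹ * v j) = -α * (P j i * v j) := by
        rw [hrev i j]
        field_simp [hμne j]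
      have h3 : μ i * P i j * (-α * (μ i)⁻¹ * v i) = -α * (P i j * v i) := by
        field_simp [hμne i]
      simp only [hDk, ContinuousLinearMap.add_apply, ContinuousLinearMap.smul_apply,
        ContinuousLinearMap.proj_apply, smul_eq_mul]
      rw [h2, h3]
    have e2 : (∑ j, -α * (P i j * v i)) = -α * v i := by
      rw [← Finset.mul_sum, ← Finset.sum_mul, hP_rowsum, one_mul]
    simp only [hL, ContinuousLinearMap.sum_apply]
    rw [Finset.sum_congr rfl fun j _ => e1 j, Finset.sum_add_distrib, e2, ← Finset.mul_sum]
  have hSapp : ∀ v, (∑ l, L l) v = -(2 * α) * (∑ j, v j) := by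
    intro v
    simp only [ContinuousLinearMap.sum_apply]
    rw [Finset.sum_congr rfl fun l _ => hLapp l v]
    rw [Finset.sum_add_distrib]
    have : (∑ l, -α * ∑ j, P j l * v j) = -α * ∑ j, v j := by
      rw [← Finset.mul_sum, Finset.sum_comm]
      congr 1
      refine Finset.sum_congr rfl fun j _ => ?_
      rw [← Finset.sum_mul, hP_rowsum, one_mul]
    rw [this, ← Finset.mul_sum]
    ring
  -- main derivative
  set A : Matrix (Fin N) (Fin N) ℝ :=
    (2 * α) • vecMulVec μ (fun _ => (1 : ℝ)) - α • Pᵀ - α • (1 : Matrix (Fin N) (Fin N) ℝ)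
    with hA
  have hAapp : ∀ (v : Fin N → ℝ) (i), (A *ᵥ v) i
      = 2 * α * μ i * (∑ j, v j) + (-α * (∑ j, P j i * v j) + -α * v i) := by
    intro v i
    simp only [hA, mulVec, dotProduct, Matrix.sub_apply, Matrix.smul_apply,
      vecMulVec_apply, transpose_apply, Matrix.one_apply, smul_eq_mul]
    rw [Finset.sum_congr rfl (fun j _ => by ring :
      ∀ j ∈ Finset.univ, (2 * α * (μ i * 1) - α * P j i - α * (if i = j then (1:ℝ) else 0)) * v j
        = 2 * α * μ i * v j - α * (P j i * v j) - α * ((if i = j then (1:ℝ) else 0) * v j))]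
    rw [Finset.sum_sub_distrib, Finset.sum_sub_distrib, ← Finset.mul_sum, ← Finset.mul_sum,
      ← Finset.mul_sum]
    simp [Finset.sum_ite_eq, mul_assoc]
    ring
  have hmain : HasFDerivAt (srrwPi P μ α) A.mulVecLin.toContinuousLinearMap μ := by
    apply hasFDerivAt_pi''
    intro i
    -- inverse of denominator
    have hinv : HasFDerivAt (fun x : Fin N → ℝ =>
        (∑ l, ∑ j, μ l * P l j * (x l / μ l) ^ (-α) * (x j / μ j) ^ (-α))⁻¹)
        ((-1 : ℝ) • (∑ l, L l)) μ := by
      have h := (hasDerivAt_inv hSne).comp_hasFDerivAt μ hS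
      refine (h.congr_fderiv ?_)
      have hfn : ((fun y : ℝ => y⁻¹) ∘ fun x : Fin N → ℝ =>
          ∑ l, ∑ j, μ l * P l j * (x l / μ l) ^ (-α) * (x j / μ j) ^ (-α)) = fun x =>
          (∑ l, ∑ j, μ l * P l j * (x l / μ l) ^ (-α) * (x j / μ j) ^ (-α))⁻¹ := rfl
      rw [hSval, one_pow, inv_one, neg_smul, one_smul]
    have hdiv := (hNf i).fun_mul hinv
    have : HasFDerivAt (fun x : Fin N → ℝ => srrwPi P μ α x i)
        ((∑ j, μ i * P i j * (μ i / μ i) ^ (-α) * (μ j / μ j) ^ (-α)) • ((-1 : ℝ) • ∑ l, L l)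
          + (∑ l, ∑ j, μ l * P l j * (μ l / μ l) ^ (-α) * (μ j / μ j) ^ (-α))⁻¹ • L i) μ := by
      simpa only [srrwPi, div_eq_mul_inv] using hdiv
    refine this.congr_fderiv ?_
    ext v
    simp only [ContinuousLinearMap.add_apply, ContinuousLinearMap.smul_apply,
      ContinuousLinearMap.coe_comp', Function.comp_apply, ContinuousLinearMap.proj_apply,
      LinearMap.coe_toContinuousLinearMap', Matrix.mulVecLin_apply, smul_eq_mul,
      hNval, hSval, hμ_sum, inv_one, one_mul]
    rw [hLapp, hSapp, hAapp]
    ring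
  refine ⟨hmain, ?_, ?_⟩
  · rw [hA, add_smul, one_smul]
    abel
  · have hcomp := (Hbarᵀ.mulVecLin.toContinuousLinearMap).hasFDerivAt.comp μ hmain
    have hfun : (fun x => Hbarᵀ *ᵥ (srrwPi P μ α x))
        = (Hbarᵀ.mulVecLin.toContinuousLinearMap) ∘ (srrwPi P μ α) := by
      funext x; simp [Function.comp, Matrix.mulVec_transpose]
    rw [hfun]
    refine hcomp.congr_fderiv ?_
    have hzero : Hbarᵀ * vecMulVec μ (fun _ : Fin N => (1 : ℝ)) = 0 := by
      ext d j
      simp only [Matrix.mul_apply, vecMulVec_apply, mul_one, Matrix.zero_apply]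
      have := congrFun hHbar d
      simpa [mulVec, dotProduct] using this
    have hmat : Hbarᵀ * A = (-α) • (Hbarᵀ * (Pᵀ + 1)) := by
      rw [hA]
      rw [Matrix.mul_sub, Matrix.mul_sub, Matrix.mul_smul, Matrix.mul_smul, Matrix.mul_smul,
        hzero, Matrix.mul_add, Matrix.mul_one]
      simp only [smul_zero, neg_smul, smul_add]
      abel
    ext v i
    simp only [ContinuousLinearMap.coe_comp', Function.comp_apply,
      LinearMap.coe_toContinuousLinearMap', Matrix.mulVecLin_apply]
    rw [Matrix.mulVec_mulVec, hmat]
end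
end
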